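/- Let Z = (∑ Y)_∞ with shifts L, R and zeroth-coordinate projection P₀. For any T ∈ L(Z), P₀ T is a commutator: P₀ T = L (R S₀) − (R S₀) L, where S₀ is the coordinatewise sum ∑_{n=0}^∞ Rⁿ P₀ T Lⁿ. -/
import Mathlib


open ENNReal Filter Topology

/-- For `Z = (∑ Y)_∞` and `T ∈ L(Z)`: with `S₀` the coordinatewise sum of
`∑ₙ Rⁿ P₀ T Lⁿ`, we have `P₀ T = L (R S₀) − (R S₀) L`, so `P₀ T` is a commutator. -/
theorem linfty_P0T_commutator {Y : Type*} [NormedAddCommGroup Y] [NormedSpace ℂ Y]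
    [CompleteSpace Y]
    (L R P0 : lp (fun _ : ℕ => Y) ∞ →L[ℂ] lp (fun _ : ℕ => Y) ∞)
    (hL : ∀ (f : lp (fun _ : ℕ => Y) ∞) (n : ℕ), L f n = f (n + 1))
    (hR0 : ∀ f : lp (fun _ : ℕ => Y) ∞, R f 0 = 0)
    (hR : ∀ (f : lp (fun _ : ℕ => Y) ∞) (n : ℕ), R f (n + 1) = f n)
    (hP0 : ∀ f : lp (fun _ : ℕ => Y) ∞, P0 f 0 = f 0)
    (hP : ∀ (f : lp (fun _ : ℕ => Y) ∞) (n : ℕ), P0 f (n + 1) = 0)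
    (T S0 : lp (fun _ : ℕ => Y) ∞ →L[ℂ] lp (fun _ : ℕ => Y) ∞)
    (hS0 : ∀ (x : lp (fun _ : ℕ => Y) ∞) (k : ℕ),
      Tendsto (fun N => (∑ n ∈ Finset.range N, (R ^ n * (P0 * T) * L ^ n) x : lp (fun _ : ℕ => Y) ∞) k)
        atTop (𝓝 (S0 x k))) :
    P0 * T = L * (R * S0) - (R * S0) * L := by
  -- powers of R
  have hRpow : ∀ (n : ℕ) (f : lp (fun _ : ℕ => Y) ∞) (m : ℕ), ((R ^ n) f) (n + m) = f m := by
    intro n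
    induction n with
    | zero => intro f m; simp
    | succ n ih =>
      intro f m
      have h1 : (R ^ (n + 1)) f = (R ^ n) (R f) := by rw [pow_succ]; rfl
      have h2 : n + 1 + m = n + (m + 1) := by omega
      rw [h1, h2, ih (R f) (m + 1), hR]
  have hRzero : ∀ (n : ℕ) (f : lp (fun _ : ℕ => Y) ∞) (k : ℕ), k < n → ((R ^ n) f) k = 0 := by
    intro n
    induction n with
    | zero => intro f k hk; omega
    | succ n ih =>
      intro f k hk
      have h1 : (R ^ (n + 1)) f = (R ^ n) (R f) := by rw [pow_succ]; rfl
      rw [h1]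
      rcases lt_or_ge k n with h | h
      · exact ih (R f) k h
      · have hk' : k = n := by omega
        subst hk'
        have := hRpow k (R f) 0
        simpa [hR0] using this
  have hLpow : ∀ (n : ℕ) (f : lp (fun _ : ℕ => Y) ∞) (k : ℕ), ((L ^ n) f) k = f (k + n) := by
    intro n
    induction n with
    | zero => intro f k; simp
    | succ n ih =>
      intro f k
      have h1 : (L ^ (n + 1)) f = (L ^ n) (L f) := by rw [pow_succ]; rfl
      have h2 : k + (n + 1) = k + n + 1 := by omega
      rw [h1, ih (L f) k, hL, h2]
  -- compute S0 coordinatewise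
  have key : ∀ (x : lp (fun _ : ℕ => Y) ∞) (k : ℕ), S0 x k = (T ((L ^ k) x)) 0 := by
    intro x k
    have hterm : ∀ n : ℕ, ((R ^ n * (P0 * T) * L ^ n) x : lp (fun _ : ℕ => Y) ∞) k
        = if n = k then (T ((L ^ k) x)) 0 else 0 := by
      intro n
      have happ : (R ^ n * (P0 * T) * L ^ n) x = (R ^ n) (P0 (T ((L ^ n) x))) := rfl
      rw [happ]
      rcases lt_trichotomy n k with h | h | h
      · have hk : k = n + (k - n - 1 + 1) := by omega
        rw [if_neg (by omega), hk, hRpow n _ (k - n - 1 + 1), hP]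
      · subst h
        have h0 := hRpow n (P0 (T ((L ^ n) x))) 0
        rw [Nat.add_zero] at h0
        rw [if_pos rfl, h0, hP0]
      · rw [if_neg (by omega), hRzero n _ k h]
    have hsum : ∀ N : ℕ, (∑ n ∈ Finset.range N, (R ^ n * (P0 * T) * L ^ n) x :
        lp (fun _ : ℕ => Y) ∞) k
        = ∑ n ∈ Finset.range N, ((R ^ n * (P0 * T) * L ^ n) x : lp (fun _ : ℕ => Y) ∞) k := by
      intro N
      induction N with
      | zero => simp [lp.coeFn_zero]
      | succ N ihN =>
        rw [Finset.sum_range_succ, Finset.sum_range_succ, ← ihN]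
        simp [lp.coeFn_add]
    have hconst : Tendsto (fun N => (∑ n ∈ Finset.range N,
        (R ^ n * (P0 * T) * L ^ n) x : lp (fun _ : ℕ => Y) ∞) k) atTop (𝓝 ((T ((L ^ k) x)) 0)) := by
      apply Tendsto.congr' _ tendsto_const_nhds
      filter_upwards [eventually_ge_atTop (k + 1)] with N hN
      rw [hsum N]
      simp only [hterm]
      rw [Finset.sum_ite_eq' (Finset.range N) k,
        if_pos (Finset.mem_range.mpr (by omega))]
    exact tendsto_nhds_unique (hS0 x k) hconst
  -- conclude
  ext x k
  have hcoe : ((L * (R * S0) - (R * S0) * L) x : lp (fun _ : ℕ => Y) ∞) k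
      = (L (R (S0 x))) k - (R (S0 (L x))) k := by
    simp [ContinuousLinearMap.sub_apply, ContinuousLinearMap.mul_apply, lp.coeFn_sub]
  have hlhs : ((P0 * T) x : lp (fun _ : ℕ => Y) ∞) k = (P0 (T x)) k := rfl
  rw [hlhs, hcoe]
  cases k with
  | zero =>
    rw [hP0, hL, hR, hR0, key x 0]
    simp
  | succ m =>
    rw [hP, hL, hR, hR, key x (m + 1), key (L x) m]
    have : (L ^ (m + 1)) x = (L ^ m) (L x) := by rw [pow_succ]; rfl
    rw [this, sub_self]
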